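/- For every integer k ≥ 2, the set of processes admitting strong universal online learning for k-class classification equals that for binary classification: SUOL_{(𝒳,ρ,[k],ℓ01)} = SUOL_{(𝒳,ρ,{0,1},ℓ01)}, where [k] = {1,...,k}. -/

import Mathlib

open MeasureTheory Filter Topology

/-- A near-metric loss structure on `Y`: symmetric, point-discerning, with a
relaxed triangle inequality with constant `c`. -/
structure NearMetric (Y : Type) where
  loss : Y → Y → ℝ
  nonneg : ∀ y₁ y₂, 0 ≤ loss y₁ y₂
  symm : ∀ y₁ y₂, loss y₁ y₂ = loss y₂ y₁
  eq_zero_iff : ∀ y₁ y₂, loss y₁ y₂ = 0 ↔ y₁ = y₂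
  c : ℝ
  c_nonneg : 0 ≤ c
  triangle : ∀ y₁ y₂ y₃, loss y₁ y₃ ≤ c * (loss y₂ y₁ + loss y₂ y₃)

namespace NearMetric

/-- `(Y, ℓ)` is separable: there is a countable `ℓ`-dense sequence. -/
def Separable {Y : Type} (L : NearMetric Y) : Prop :=
  ∃ s : ℕ → Y, ∀ y : Y, ∀ ε : ℝ, 0 < ε → ∃ i : ℕ, L.loss (s i) y < ε

/-- `0 < ℓ̄ < ∞`: the supremum of the loss is positive and finite. -/
def BoundedPos {Y : Type} (L : NearMetric Y) : Prop :=
  (∃ y₁ y₂, 0 < L.loss y₁ y₂) ∧ (∃ M : ℝ, ∀ y₁ y₂, L.loss y₁ y₂ ≤ M)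

/-- The σ-algebra on `Y` generated by `ℓ`-balls. -/
def mSpace {Y : Type} (L : NearMetric Y) : MeasurableSpace Y :=
  MeasurableSpace.generateFrom {B | ∃ (y : Y) (ε : ℝ), B = {y' | L.loss y y' < ε}}

/-- Measurability of a map into `Y` with respect to the ball σ-algebra of `L`. -/
def MeasurableFun {X Y : Type} [MeasurableSpace X] (L : NearMetric Y) (f : X → Y) : Prop :=
  @Measurable X Y _ L.mSpace f

end NearMetric

/-- The 0–1 loss on any type with decidable equality. -/
def l01 (Y : Type) [DecidableEq Y] : NearMetric Y where
  loss y₁ y₂ := if y₁ = y₂ then 0 else 1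
  nonneg := by intro a b; split <;> norm_num
  symm := by intro a b; simp [eq_comm]
  eq_zero_iff := by intro a b; split <;> simp_all
  c := 1
  c_nonneg := by norm_num
  triangle := by
    intro a b c
    by_cases h1 : a = c <;> by_cases h2 : b = a <;> by_cases h3 : b = c <;>
      simp_all

/-- An online learning rule: a sequence of measurable maps
`f t : 𝒳^t × 𝒴^t × 𝒳 → 𝒴` (the history at time `t+1` has length `t`). -/
def IsLearningRule {X Y : Type} [MeasurableSpace X] (L : NearMetric Y)
    (f : (t : ℕ) → (Fin t → X) → (Fin t → Y) → X → Y) : Prop :=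
  letI : MeasurableSpace Y := L.mSpace
  ∀ t : ℕ, Measurable fun p : (Fin t → X) × (Fin t → Y) × X => f t p.1 p.2.1 p.2.2

/-- The average loss of learning rule `f` on target `fstar` under process `Xp`
up to horizon `T`, at sample `ω`. -/
noncomputable def avgLoss {X Y Ω : Type} (L : NearMetric Y) (Xp : ℕ → Ω → X)
    (f : (t : ℕ) → (Fin t → X) → (Fin t → Y) → X → Y) (fstar : X → Y)
    (T : ℕ) (ω : Ω) : ℝ :=
  (T : ℝ)⁻¹ * ∑ t ∈ Finset.range T,
    L.loss (f t (fun i => Xp i.1 ω) (fun i => fstar (Xp i.1 ω)) (Xp t ω)) (fstar (Xp t ω))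

/-- The rule `f` is (strongly) consistent for target `fstar` under the process `Xp`. -/
def Consistent {X Y Ω : Type} [MeasurableSpace Ω] (μ : Measure Ω) (L : NearMetric Y)
    (Xp : ℕ → Ω → X) (f : (t : ℕ) → (Fin t → X) → (Fin t → Y) → X → Y)
    (fstar : X → Y) : Prop :=
  ∀ᵐ ω ∂μ, Tendsto (fun T => avgLoss L Xp f fstar T ω) atTop (𝓝 0)

/-- `Xp ∈ SUOL`: the process admits strong universal online learning for
the value space `(Y, L)`. -/
def SUOL {X Y Ω : Type} [MeasurableSpace X] [MeasurableSpace Ω] (μ : Measure Ω)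
    (L : NearMetric Y) (Xp : ℕ → Ω → X) : Prop :=
  ∃ f : (t : ℕ) → (Fin t → X) → (Fin t → Y) → X → Y,
    IsLearningRule L f ∧
    ∀ fstar : X → Y, L.MeasurableFun fstar → Consistent μ L Xp f fstar


section Aux

open MeasurableSpace

lemma l01_loss_eq {Y : Type} [DecidableEq Y] (a b : Y) :
    (l01 Y).loss a b = if a = b then 0 else 1 := rfl

lemma l01_mSpace_eq_top (Y : Type) [DecidableEq Y] [Countable Y] :
    (l01 Y).mSpace = ⊤ := by
  refine le_antisymm le_top ?_
  intro s _
  have hsing : ∀ y : Y, MeasurableSet[(l01 Y).mSpace] {y} := by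
    intro y
    have hball : ({y} : Set Y) = {y' | (l01 Y).loss y y' < 1} := by
      ext y'
      by_cases h : y = y' <;> simp [l01_loss_eq, h, eq_comm]
    rw [hball]
    exact measurableSet_generateFrom ⟨y, 1, rfl⟩
  have hs : s = ⋃ y ∈ s, {y} := by ext z; simp
  rw [hs]
  exact MeasurableSet.biUnion s.to_countable (fun y _ => hsing y)

lemma pi_top_eq_top (ι Y : Type) [Finite ι] [Countable Y] :
    (@MeasurableSpace.pi ι (fun _ => Y) (fun _ => (⊤ : MeasurableSpace Y))) = ⊤ := by
  refine le_antisymm le_top ?_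
  intro s _
  have hsing : ∀ g : ι → Y,
      MeasurableSet[@MeasurableSpace.pi ι (fun _ => Y) (fun _ => ⊤)] {g} := by
    intro g
    have : ({g} : Set (ι → Y)) = ⋂ i, (fun h : ι → Y => h i) ⁻¹' {g i} := by
      ext h; simp [funext_iff, Set.mem_iInter]
    rw [this]
    exact MeasurableSet.iInter fun i =>
      @measurable_pi_apply ι (fun _ => Y) (fun _ => ⊤) i _ trivial
  have hs : s = ⋃ g ∈ s, {g} := by ext z; simp
  rw [hs]
  exact MeasurableSet.biUnion s.to_countable (fun g _ => hsing g)

lemma avgLoss_nonneg {X Y Ω : Type} (L : NearMetric Y) (Xp : ℕ → Ω → X)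
    (f : (t : ℕ) → (Fin t → X) → (Fin t → Y) → X → Y) (fstar : X → Y)
    (T : ℕ) (ω : Ω) : 0 ≤ avgLoss L Xp f fstar T ω :=
  mul_nonneg (inv_nonneg.2 (Nat.cast_nonneg T))
    (Finset.sum_nonneg fun _ _ => L.nonneg _ _)

/-- Combining rule: the least index predicted positive, or `0`. -/
def Phi {k : ℕ} (hk0 : 0 < k) (b : Fin k → Bool) : Fin k :=
  if h : (Finset.univ.filter (fun i => b i = true)).Nonempty then
    (Finset.univ.filter (fun i => b i = true)).min' h else ⟨0, hk0⟩

lemma phi_key {k : ℕ} (hk0 : 0 < k) (b : Fin k → Bool) (y : Fin k) :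
    (l01 (Fin k)).loss (Phi hk0 b) y ≤
      ∑ i : Fin k, (l01 Bool).loss (b i) (decide (y = i)) := by
  by_cases hy : Phi hk0 b = y
  · rw [l01_loss_eq, if_pos hy]
    exact Finset.sum_nonneg fun _ _ => (l01 Bool).nonneg _ _
  · have hex : ∃ i, b i ≠ decide (y = i) := by
      by_contra hall
      push_neg at hall
      have hby : b y = true := by rw [hall y]; simp
      have hne : (Finset.univ.filter (fun i => b i = true)).Nonempty :=
        ⟨y, Finset.mem_filter.mpr ⟨Finset.mem_univ y, hby⟩⟩
      have hmem : Phi hk0 b ∈ Finset.univ.filter (fun i => b i = true) := by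
        rw [Phi, dif_pos hne]; exact Finset.min'_mem _ hne
      have : b (Phi hk0 b) = true := by simpa using hmem
      rw [hall (Phi hk0 b)] at this
      have heq : y = Phi hk0 b := by simpa using this
      exact hy heq.symm
    obtain ⟨i, hi⟩ := hex
    rw [l01_loss_eq, if_neg hy]
    calc (1 : ℝ) = (l01 Bool).loss (b i) (decide (y = i)) := by
          rw [l01_loss_eq, if_neg hi]
      _ ≤ ∑ j : Fin k, (l01 Bool).loss (b j) (decide (y = j)) :=
          Finset.single_le_sum (f := fun j => (l01 Bool).loss (b j) (decide (y = j)))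
            (fun j _ => (l01 Bool).nonneg _ _) (Finset.mem_univ i)

lemma retract_bound {Y Z : Type} [DecidableEq Y] [DecidableEq Z]
    (e : Z → Y) (r : Y → Z) (hre : ∀ z, r (e z) = z) (u : Y) (b : Z) :
    (l01 Z).loss (r u) b ≤ (l01 Y).loss u (e b) := by
  rw [l01_loss_eq, l01_loss_eq]
  by_cases h : u = e b
  · simp [h, hre]
  · rw [if_neg h]
    split_ifs <;> norm_num

end Aux

/-- For every `k ≥ 2`, a process admits strong universal online
learning for `k`-class classification iff it does for binary classification. -/
theorem suol_finite_classes_iff_binary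
    {𝒳 : Type} [MetricSpace 𝒳] [TopologicalSpace.SeparableSpace 𝒳]
    [MeasurableSpace 𝒳] [BorelSpace 𝒳]
    (k : ℕ) (hk : 2 ≤ k)
    {Ω : Type} [MeasurableSpace Ω] (μ : Measure Ω) [IsProbabilityMeasure μ]
    (Xp : ℕ → Ω → 𝒳) (hX : ∀ t, Measurable (Xp t)) :
    SUOL μ (l01 (Fin k)) Xp ↔ SUOL μ (l01 Bool) Xp := by
  classical
  have hk0 : 0 < k := by omega
  have hk1 : 1 < k := by omega
  have hFromK : ∀ {W : Type} (mW : MeasurableSpace W) (u : Fin k → W),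
      @Measurable (Fin k) W (l01 (Fin k)).mSpace mW u := by
    intro W mW u
    rw [l01_mSpace_eq_top]
    exact measurable_from_top
  have hFromB : ∀ {W : Type} (mW : MeasurableSpace W) (u : Bool → W),
      @Measurable Bool W (l01 Bool).mSpace mW u := by
    intro W mW u
    rw [l01_mSpace_eq_top]
    exact measurable_from_top
  constructor
  · rintro ⟨f, hf, hcons⟩
    set e : Bool → Fin k := fun b => if b then ⟨1, hk1⟩ else ⟨0, hk0⟩ with he
    set r : Fin k → Bool := fun y => decide (y = ⟨1, hk1⟩) with hr
    have hre : ∀ b, r (e b) = b := by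
      intro b
      cases b <;> simp [he, hr, Fin.ext_iff]
    refine ⟨fun t xs ys x => r (f t xs (fun j => e (ys j)) x), ?_, ?_⟩
    · intro t
      letI : MeasurableSpace Bool := (l01 Bool).mSpace
      letI : MeasurableSpace (Fin k) := (l01 (Fin k)).mSpace
      have hA : Measurable (fun p : (Fin t → 𝒳) × (Fin t → Bool) × 𝒳 =>
          ((p.1, fun j => e (p.2.1 j), p.2.2) : (Fin t → 𝒳) × (Fin t → Fin k) × 𝒳)) := by
        refine Measurable.prodMk measurable_fst
          (Measurable.prodMk ?_ (measurable_snd.comp measurable_snd))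
        refine measurable_pi_lambda _ fun j => ?_
        exact (hFromB _ e).comp
          ((measurable_pi_apply j).comp (measurable_fst.comp measurable_snd))
      exact (hFromK _ r).comp ((hf t).comp hA)
    · intro gstar hgstar
      have hfstar : (l01 (Fin k)).MeasurableFun (fun x => e (gstar x)) :=
        (hFromB _ e).comp hgstar
      have H := hcons _ hfstar
      filter_upwards [H] with ω hω
      refine squeeze_zero (fun T => avgLoss_nonneg _ _ _ _ _ _) (fun T => ?_) hω
      unfold avgLoss
      refine mul_le_mul_of_nonneg_left (Finset.sum_le_sum fun t _ => ?_)
        (inv_nonneg.2 (Nat.cast_nonneg T))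
      exact retract_bound e r hre _ _
  · rintro ⟨g, hg, hcons⟩
    refine ⟨fun t xs ys x => Phi hk0 (fun i => g t xs (fun j => decide (ys j = i)) x),
      ?_, ?_⟩
    · intro t
      have hPhi : @Measurable (Fin k → Bool) (Fin k)
          (@MeasurableSpace.pi (Fin k) (fun _ => Bool) (fun _ => (l01 Bool).mSpace))
          (l01 (Fin k)).mSpace (Phi hk0) := by
        rw [l01_mSpace_eq_top (Fin k), l01_mSpace_eq_top Bool]
        rw [pi_top_eq_top]
        exact measurable_from_top
      letI : MeasurableSpace Bool := (l01 Bool).mSpace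
      letI : MeasurableSpace (Fin k) := (l01 (Fin k)).mSpace
      have hB : Measurable (fun p : (Fin t → 𝒳) × (Fin t → Fin k) × 𝒳 =>
          (fun i => g t p.1 (fun j => decide (p.2.1 j = i)) p.2.2 : Fin k → Bool)) := by
        refine measurable_pi_lambda _ fun i => ?_
        have hC : Measurable (fun p : (Fin t → 𝒳) × (Fin t → Fin k) × 𝒳 =>
            ((p.1, fun j => decide (p.2.1 j = i), p.2.2) :
              (Fin t → 𝒳) × (Fin t → Bool) × 𝒳)) := by
          refine Measurable.prodMk measurable_fst
            (Measurable.prodMk ?_ (measurable_snd.comp measurable_snd))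
          refine measurable_pi_lambda _ fun j => ?_
          exact (hFromK _ (fun y => decide (y = i))).comp
            ((measurable_pi_apply j).comp (measurable_fst.comp measurable_snd))
        exact (hg t).comp hC
      exact hPhi.comp hB
    · intro fstar hfstar
      have hmeas : ∀ i : Fin k, (l01 Bool).MeasurableFun (fun x => decide (fstar x = i)) :=
        fun i => (hFromK _ (fun y => decide (y = i))).comp hfstar
      have hae : ∀ᵐ ω ∂μ, ∀ i : Fin k,
          Tendsto (fun T => avgLoss (l01 Bool) Xp g (fun x => decide (fstar x = i)) T ω)
            atTop (𝓝 0) :=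
        (MeasureTheory.ae_all_iff).2 fun i => hcons _ (hmeas i)
      filter_upwards [hae] with ω hω
      have hsum : Tendsto (fun T => ∑ i : Fin k,
          avgLoss (l01 Bool) Xp g (fun x => decide (fstar x = i)) T ω) atTop (𝓝 0) := by
        have := tendsto_finset_sum Finset.univ (fun i (_ : i ∈ Finset.univ) => hω i)
        simpa using this
      refine squeeze_zero (fun T => avgLoss_nonneg _ _ _ _ _ _) (fun T => ?_) hsum
      calc avgLoss (l01 (Fin k)) Xp
            (fun t xs ys x => Phi hk0 (fun i => g t xs (fun j => decide (ys j = i)) x))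
            fstar T ω
          ≤ (T : ℝ)⁻¹ * ∑ t ∈ Finset.range T, ∑ i : Fin k,
              (l01 Bool).loss
                (g t (fun j => Xp j.1 ω) (fun j => decide (fstar (Xp j.1 ω) = i)) (Xp t ω))
                (decide (fstar (Xp t ω) = i)) := by
            unfold avgLoss
            refine mul_le_mul_of_nonneg_left (Finset.sum_le_sum fun t _ => ?_)
              (inv_nonneg.2 (Nat.cast_nonneg T))
            exact phi_key hk0 _ _
        _ = ∑ i : Fin k, avgLoss (l01 Bool) Xp g (fun x => decide (fstar x = i)) T ω := by
            unfold avgLoss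
            rw [← Finset.mul_sum, Finset.sum_comm]
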